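/- arXiv:2311.02865 — 6 statements merged into one kernel-verified Lean document; each statement's English description precedes it below -/
import Mathlib

section
/- Let n be a positive integer and let α ∈ (0, 1/2). Let t_n* ∈ (0, n) be the unique solution of P_n(t_n*) = α. Then for every Lebesgue-measurable set R ⊆ [0,1]^n of positive volume satisfying ∫_R ‖x‖₁ dx ≤ n·α·vol(R), one has vol(R) ≤ V_n(t_n*); i.e., the truncated cube 𝒯_n(t_n*) maximizes volume among all subsets of the unit cube whose average first moment is at most nα. -/
open MeasureTheory

/-- The truncated cube `𝒯_n(t) = {x ∈ [0,1]^n : ∑ i, x i ≤ t}`. -/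
def truncCube (n : ℕ) (t : ℝ) : Set (Fin n → ℝ) :=
  {x | (∀ i, x i ∈ Set.Icc (0 : ℝ) 1) ∧ ∑ i, x i ≤ t}

/-- Volume of the truncated cube. -/
noncomputable def truncVol (n : ℕ) (t : ℝ) : ℝ :=
  (volume (truncCube n t)).toReal

/-- Average first moment of the truncated cube. -/
noncomputable def truncMoment (n : ℕ) (t : ℝ) : ℝ :=
  (1 / (n * truncVol n t)) * ∫ x in truncCube n t, ∑ i, x i

set_option maxHeartbeats 1000000 in
theorem optimal_shaping
    (n : ℕ) (hn : 0 < n) (α : ℝ) (hα : α ∈ Set.Ioo (0 : ℝ) (1 / 2))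
    (t : ℝ) (ht : t ∈ Set.Ioo (0 : ℝ) n) (htα : truncMoment n t = α)
    (huniq : ∀ s ∈ Set.Ioo (0 : ℝ) (n : ℝ), truncMoment n s = α → s = t)
    (R : Set (Fin n → ℝ)) (hRmeas : MeasurableSet R)
    (hRcube : R ⊆ {x | ∀ i, x i ∈ Set.Icc (0 : ℝ) 1})
    (hRpos : 0 < volume R)
    (hRmoment : ∫ x in R, ∑ i, x i ≤ n * α * (volume R).toReal) :
    (volume R).toReal ≤ truncVol n t := by
  have ht0 : (0:ℝ) < t := ht.1
  have htn : t < n := ht.2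
  have hn' : (0:ℝ) < n := by exact_mod_cast hn
  -- cube
  set C : Set (Fin n → ℝ) := {x | ∀ i, x i ∈ Set.Icc (0 : ℝ) 1} with hC
  have hCeq : C = Set.pi Set.univ fun _ => Set.Icc (0:ℝ) 1 := by
    ext x
    simp only [hC, Set.mem_setOf_eq, Set.mem_pi, Set.mem_univ, forall_true_left]
  have hCmeas : MeasurableSet C := by
    rw [hCeq]; exact MeasurableSet.univ_pi fun i => measurableSet_Icc
  have hCvol : volume C = 1 := by
    rw [hCeq, volume_pi_pi]
    simp [Real.volume_Icc]
  have hfin : ∀ A : Set (Fin n → ℝ), A ⊆ C → volume A ≠ ⊤ := by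
    intro A hA
    exact ((measure_mono hA).trans_lt (by rw [hCvol]; exact ENNReal.one_lt_top)).ne
  -- truncated cube
  set T : Set (Fin n → ℝ) := truncCube n t with hT
  have hTsub : T ⊆ C := fun x hx => hx.1
  have hTmeas : MeasurableSet T := by
    have h1 : IsClosed C := by
      rw [hCeq]; exact isClosed_set_pi fun i _ => isClosed_Icc
    have h2 : IsClosed {x : Fin n → ℝ | ∑ i, x i ≤ t} :=
      isClosed_le (continuous_finset_sum _ fun i _ => continuous_apply i) continuous_const
    exact (h1.inter h2).measurableSet
  -- integrability helper
  have hcont : Continuous fun x : Fin n → ℝ => ∑ i, x i :=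
    continuous_finset_sum _ fun i _ => continuous_apply i
  have hint : ∀ A : Set (Fin n → ℝ), MeasurableSet A → A ⊆ C →
      IntegrableOn (fun x => ∑ i, x i) A volume := by
    intro A hAm hAC
    refine Measure.integrableOn_of_bounded (hfin A hAC) hcont.aestronglyMeasurable
      (M := n) ?_
    filter_upwards [ae_restrict_mem hAm] with x hx
    have hxC := hAC hx
    have h1 : ∑ i, x i ≤ n := by
      calc ∑ i, x i ≤ ∑ _i : Fin n, (1:ℝ) :=
            Finset.sum_le_sum fun i _ => (hxC i).2
        _ = n := by simp
    have h0 : 0 ≤ ∑ i, x i := Finset.sum_nonneg fun i _ => (hxC i).1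
    rw [Real.norm_eq_abs, abs_of_nonneg h0]; exact h1
  -- the little box inside T
  set c : ℝ := t / (2 * n) with hc
  have hc0 : 0 < c := by positivity
  have hc1 : c ≤ 1 := by
    rw [hc, div_le_one (by positivity)]; nlinarith
  set B : Set (Fin n → ℝ) := Set.pi Set.univ fun _ => Set.Icc (0:ℝ) c with hB
  have hBmeas : MeasurableSet B := MeasurableSet.univ_pi fun i => measurableSet_Icc
  have hBsum : ∀ x ∈ B, ∑ i, x i ≤ t / 2 := by
    intro x hx
    calc ∑ i, x i ≤ ∑ _i : Fin n, c :=
          Finset.sum_le_sum fun i _ => (hx i (Set.mem_univ i)).2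
      _ = n * c := by simp [mul_comm]
      _ = t / 2 := by field_simp [hc]; rw [hc]; field_simp
  have hBT : B ⊆ T := by
    intro x hx
    refine ⟨fun i => ⟨(hx i (Set.mem_univ i)).1, le_trans (hx i (Set.mem_univ i)).2 hc1⟩, ?_⟩
    have := hBsum x hx
    linarith
  have hBvol : volume B = ENNReal.ofReal c ^ n := by
    rw [hB, volume_pi_pi]
    simp [Real.volume_Icc]
  have hBvol_pos : 0 < (volume B).toReal := by
    rw [hBvol, ENNReal.toReal_pow, ENNReal.toReal_ofReal hc0.le]
    positivity
  have hTvol_pos : 0 < (volume T).toReal :=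
    lt_of_lt_of_le hBvol_pos (ENNReal.toReal_mono (hfin T hTsub) (measure_mono hBT))
  -- real volumes
  have hTfin := hfin T hTsub
  have hRfin := hfin R hRcube
  -- integral over T equals n α vol T
  have hvolT := hTvol_pos
  have hIT : ∫ x in T, ∑ i, x i = n * α * (volume T).toReal := by
    have h := htα
    rw [truncMoment] at h
    have hv : truncVol n t = (volume T).toReal := rfl
    rw [hv] at h
    have hne : (n:ℝ) * (volume T).toReal ≠ 0 := by positivity
    field_simp at h
    linarith [h]
  -- key strict bound: n α < t
  have hsplitT : ∫ x in T, ∑ i, x i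
      = (∫ x in B, ∑ i, x i) + ∫ x in T \ B, ∑ i, x i := by
    have hu : B ∪ (T \ B) = T := Set.union_diff_cancel hBT
    conv_lhs => rw [← hu]
    exact setIntegral_union Set.disjoint_sdiff_right (hTmeas.diff hBmeas)
      (hint B hBmeas (hBT.trans hTsub))
      (hint _ (hTmeas.diff hBmeas) ((Set.diff_subset).trans hTsub))
  have hvT_split : (volume T).toReal = (volume B).toReal + (volume (T \ B)).toReal := by
    have := measure_inter_add_diff (μ := volume) T hBmeas
    rw [Set.inter_eq_self_of_subset_right hBT] at this
    rw [← this, ENNReal.toReal_add (hfin B (hBT.trans hTsub))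
      (hfin _ ((Set.diff_subset).trans hTsub))]
  have hIB : ∫ x in B, ∑ i, x i ≤ (volume B).toReal * (t / 2) := by
    have := setIntegral_mono_on (hint B hBmeas (hBT.trans hTsub))
      (integrableOn_const (hfin B (hBT.trans hTsub)))
      hBmeas (fun x hx => hBsum x hx)
    simpa [setIntegral_const, smul_eq_mul, Measure.real] using this
  have hITB : ∫ x in T \ B, ∑ i, x i ≤ (volume (T \ B)).toReal * t := by
    have := setIntegral_mono_on (hint _ (hTmeas.diff hBmeas) ((Set.diff_subset).trans hTsub))
      (integrableOn_const (hfin _ ((Set.diff_subset).trans hTsub)))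
      (hTmeas.diff hBmeas) (fun x hx => hx.1.2)
    simpa [setIntegral_const, smul_eq_mul, Measure.real] using this
  have hnat : (n:ℝ) * α < t := by
    have h1 : n * α * (volume T).toReal < t * (volume T).toReal := by
      rw [← hIT, hsplitT]
      calc (∫ x in B, ∑ i, x i) + ∫ x in T \ B, ∑ i, x i
          ≤ (volume B).toReal * (t / 2) + (volume (T \ B)).toReal * t := by
            exact add_le_add hIB hITB
        _ < t * (volume T).toReal := by nlinarith
    exact lt_of_mul_lt_mul_right (by linarith [h1]) hTvol_pos.le |>.trans_le le_rfl
  -- now suppose vol R > vol T and derive contradiction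
  by_contra hlt
  push_neg at hlt
  have hlt' : truncVol n t < (volume R).toReal := hlt
  have hvtr : truncVol n t = (volume T).toReal := rfl
  rw [hvtr] at hlt'
  -- split integrals
  have hRT : MeasurableSet (R ∩ T) := hRmeas.inter hTmeas
  have hRdT : MeasurableSet (R \ T) := hRmeas.diff hTmeas
  have hTdR : MeasurableSet (T \ R) := hTmeas.diff hRmeas
  have hsplitR : ∫ x in R, ∑ i, x i
      = (∫ x in R ∩ T, ∑ i, x i) + ∫ x in R \ T, ∑ i, x i := by
    have hu : (R ∩ T) ∪ (R \ T) = R := Set.inter_union_diff R T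
    conv_lhs => rw [← hu]
    exact setIntegral_union (Set.disjoint_sdiff_right.mono_left Set.inter_subset_right)
      hRdT (hint _ hRT ((Set.inter_subset_left).trans hRcube))
      (hint _ hRdT ((Set.diff_subset).trans hRcube))
  have hsplitT2 : ∫ x in T, ∑ i, x i
      = (∫ x in R ∩ T, ∑ i, x i) + ∫ x in T \ R, ∑ i, x i := by
    have hu : (T ∩ R) ∪ (T \ R) = T := Set.inter_union_diff T R
    conv_lhs => rw [← hu, Set.inter_comm T R]
    exact setIntegral_union (Set.disjoint_sdiff_right.mono_left Set.inter_subset_left)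
      hTdR (hint _ hRT ((Set.inter_subset_left).trans hRcube))
      (hint _ hTdR ((Set.diff_subset).trans hTsub))
  have hvR_split : (volume R).toReal = (volume (R ∩ T)).toReal + (volume (R \ T)).toReal := by
    have := measure_inter_add_diff (μ := volume) R hTmeas
    rw [← this, ENNReal.toReal_add (hfin _ ((Set.inter_subset_left).trans hRcube))
      (hfin _ ((Set.diff_subset).trans hRcube))]
  have hvT_split2 : (volume T).toReal = (volume (R ∩ T)).toReal + (volume (T \ R)).toReal := by
    have := measure_inter_add_diff (μ := volume) T hRmeas
    rw [Set.inter_comm T R] at this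
    rw [← this, ENNReal.toReal_add (hfin _ ((Set.inter_subset_left).trans hRcube))
      (hfin _ ((Set.diff_subset).trans hTsub))]
  -- on R \ T, sum ≥ t
  have hIRdT : (volume (R \ T)).toReal * t ≤ ∫ x in R \ T, ∑ i, x i := by
    have := setIntegral_mono_on
      (integrableOn_const (hfin _ ((Set.diff_subset).trans hRcube)) : IntegrableOn (fun _ => t) _ volume)
      (hint _ hRdT ((Set.diff_subset).trans hRcube))
      hRdT (fun x hx => by
        have hxC : ∀ i, x i ∈ Set.Icc (0:ℝ) 1 := hRcube hx.1
        have hxnT : x ∉ T := hx.2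
        by_contra hlt2
        push_neg at hlt2
        exact hxnT ⟨hxC, hlt2.le⟩)
    simpa [setIntegral_const, smul_eq_mul, Measure.real] using this
  -- on T \ R, sum ≤ t
  have hITdR : ∫ x in T \ R, ∑ i, x i ≤ (volume (T \ R)).toReal * t := by
    have := setIntegral_mono_on (hint _ hTdR ((Set.diff_subset).trans hTsub))
      (integrableOn_const (hfin _ ((Set.diff_subset).trans hTsub)))
      hTdR (fun x hx => hx.1.2)
    simpa [setIntegral_const, smul_eq_mul, Measure.real] using this
  -- combine
  have key : n * α * (volume R).toReal ≥ n * α * (volume T).toReal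
      + t * ((volume R).toReal - (volume T).toReal) := by
    have h1 : ∫ x in R ∩ T, ∑ i, x i
        = (∫ x in T, ∑ i, x i) - ∫ x in T \ R, ∑ i, x i := by linarith [hsplitT2]
    have h2 := hRmoment
    rw [hsplitR, h1, hIT] at h2
    nlinarith [hITdR, hIRdT, hvR_split, hvT_split2]
  nlinarith [key, hlt', hnat]
end

section
/- For every positive integer n and every t ∈ [0, n], the volume of the truncated cube satisfies V_n(t) = (1/n!) Σ_{k=0}^{n} C(n,k) (−1)^k (t−k)^n 𝟙{t ≥ k}, where 𝟙{t ≥ k} equals 1 if t − k ≥ 0 and 0 otherwise. -/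
open MeasureTheory

/-- auxiliary summand -/
noncomputable def gAux (n k : ℕ) (t : ℝ) : ℝ :=
  (t - k) ^ n * (if 0 ≤ t - (k : ℝ) then 1 else 0)

lemma gAux_eq_indicator (n k : ℕ) :
    gAux n k = (Set.Ici ((k : ℝ))).indicator (fun s => (s - k) ^ n) := by
  funext s
  simp only [gAux, Set.indicator, Set.mem_Ici]
  by_cases h : (k : ℝ) ≤ s
  · simp [h, sub_nonneg.mpr h]
  · have : ¬ (0 ≤ s - (k : ℝ)) := by intro h'; exact h (by linarith [sub_nonneg.mp h'])
    simp [h, this]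

lemma gAux_measurable (n k : ℕ) : Measurable (gAux n k) := by
  rw [gAux_eq_indicator]
  exact ((measurable_id.sub measurable_const).pow_const n).indicator measurableSet_Ici

lemma gAux_intervalIntegrable (n k : ℕ) (a b : ℝ) :
    IntervalIntegrable (gAux n k) volume a b := by
  rw [gAux_eq_indicator]
  have hc : IntervalIntegrable (fun s : ℝ => (s - k) ^ n) volume a b :=
    (Continuous.intervalIntegrable (by continuity) a b)
  exact ⟨hc.1.indicator measurableSet_Ici, hc.2.indicator measurableSet_Ici⟩

lemma gAux_shift (m k : ℕ) (t : ℝ) : gAux m k (t - 1) = gAux m (k + 1) t := by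
  simp only [gAux]
  push_cast
  ring_nf

lemma integral_gAux_zero (n k : ℕ) {a b : ℝ} (ha : a ≤ (k : ℝ)) (hb : b ≤ (k : ℝ)) :
    ∫ s in a..b, gAux n k s = 0 := by
  have h : ∀ᵐ s ∂(volume : Measure ℝ), s ∈ Set.uIoc a b → gAux n k s = 0 := by
    rw [MeasureTheory.ae_iff]
    refine measure_mono_null ?_ (measure_singleton ((k : ℝ)))
    intro s hs
    simp only [Set.mem_setOf_eq, Classical.not_imp] at hs
    obtain ⟨hmem, hne⟩ := hs
    have hs_le : s ≤ (k : ℝ) := le_trans hmem.2 (by simp [max_le_iff, ha, hb] : max a b ≤ (k:ℝ))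
    rcases lt_or_eq_of_le hs_le with h' | h'
    · exfalso; apply hne
      simp only [gAux]
      rw [if_neg (by linarith : ¬ (0 ≤ s - (k:ℝ)))]
      ring
    · simp [h']
  calc ∫ s in a..b, gAux n k s = ∫ s in a..b, (0 : ℝ) := intervalIntegral.integral_congr_ae h
    _ = 0 := intervalIntegral.integral_zero

lemma integral_gAux (n k : ℕ) (t : ℝ) :
    ∫ s in (t-1)..t, gAux n k s
      = (gAux (n+1) k t - gAux (n+1) k (t-1)) / (n+1) := by
  have hne : ((n : ℝ) + 1) ≠ 0 := by positivity
  rcases le_or_gt t (k : ℝ) with h | h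
  · rw [integral_gAux_zero n k (by linarith) h]
    have h1 : gAux (n+1) k t = 0 := by
      simp only [gAux]
      rcases lt_or_eq_of_le h with h' | h'
      · rw [if_neg (by linarith)]; ring
      · rw [← h']; simp
    have h2 : gAux (n+1) k (t-1) = 0 := by
      simp only [gAux]
      rw [if_neg (by linarith)]; ring
    rw [h1, h2]; ring
  rcases le_or_gt (k : ℝ) (t - 1) with h2 | h2
  · -- whole interval above k
    have heq : Set.EqOn (gAux n k) (fun s => (s - k) ^ n) (Set.uIcc (t-1) t) := by
      intro s hs
      rw [Set.uIcc_of_le (by linarith)] at hs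
      simp only [gAux]
      rw [if_pos (by linarith [hs.1] : (0:ℝ) ≤ s - k)]
      ring
    rw [intervalIntegral.integral_congr heq]
    have := intervalIntegral.integral_comp_sub_right (a := t-1) (b := t) (fun x : ℝ => x ^ n) (k : ℝ)
    rw [this, integral_pow]
    simp only [gAux]
    rw [if_pos (by linarith : (0:ℝ) ≤ t - k), if_pos (by linarith : (0:ℝ) ≤ t - 1 - k)]
    ring
  · -- k is interior
    have hsplit : ∫ s in (t-1)..t, gAux n k s
        = (∫ s in (t-1)..(k:ℝ), gAux n k s) + ∫ s in (k:ℝ)..t, gAux n k s :=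
      (intervalIntegral.integral_add_adjacent_intervals
        (gAux_intervalIntegrable n k _ _) (gAux_intervalIntegrable n k _ _)).symm
    rw [hsplit, integral_gAux_zero n k (by linarith) le_rfl]
    have heq : Set.EqOn (gAux n k) (fun s => (s - k) ^ n) (Set.uIcc (k:ℝ) t) := by
      intro s hs
      rw [Set.uIcc_of_le (by linarith)] at hs
      simp only [gAux]
      rcases lt_or_eq_of_le hs.1 with h' | h'
      · rw [if_pos (by linarith : (0:ℝ) ≤ s - k)]; ring
      · rw [← h']; simp
    rw [intervalIntegral.integral_congr heq]
    have := intervalIntegral.integral_comp_sub_right (a := (k:ℝ)) (b := t) (fun x : ℝ => x ^ n) (k : ℝ)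
    rw [this, integral_pow]
    have h1 : gAux (n+1) k t = (t - k) ^ (n+1) := by
      simp only [gAux]; rw [if_pos (by linarith : (0:ℝ) ≤ t - k)]; ring
    have h2 : gAux (n+1) k (t-1) = 0 := by
      simp only [gAux]; rw [if_neg (by linarith : ¬ (0:ℝ) ≤ t - 1 - k)]; ring
    rw [h1, h2]
    simp only [sub_self, zero_pow (Nat.succ_ne_zero n)]
    ring

lemma truncCube_measurableSet (n : ℕ) (t : ℝ) : MeasurableSet (truncCube n t) := by
  have h1 : MeasurableSet {x : Fin n → ℝ | ∀ i, x i ∈ Set.Icc (0:ℝ) 1} := by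
    rw [Set.setOf_forall]
    exact MeasurableSet.iInter fun i => (measurable_pi_apply i) measurableSet_Icc
  have h2 : MeasurableSet {x : Fin n → ℝ | ∑ i, x i ≤ t} :=
    measurableSet_le (by fun_prop) measurable_const
  exact h1.inter h2

lemma truncCube_volume_le_one (n : ℕ) (t : ℝ) : volume (truncCube n t) ≤ 1 := by
  have hsub : truncCube n t ⊆ Set.pi Set.univ (fun _ : Fin n => Set.Icc (0:ℝ) 1) := by
    intro x hx
    rw [Set.mem_univ_pi]
    exact hx.1
  calc volume (truncCube n t) ≤ volume (Set.pi Set.univ (fun _ : Fin n => Set.Icc (0:ℝ) 1)) :=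
        measure_mono hsub
    _ = 1 := by rw [volume_pi_pi]; simp

lemma truncCube_volume_ne_top (n : ℕ) (t : ℝ) : volume (truncCube n t) ≠ ⊤ :=
  ne_top_of_le_ne_top ENNReal.one_ne_top (truncCube_volume_le_one n t)

lemma volume_truncCube_succ (n : ℕ) (t : ℝ) :
    volume (truncCube (n + 1) t)
      = ∫⁻ y in Set.Icc (0:ℝ) 1, volume (truncCube n (t - y)) := by
  set e := MeasurableEquiv.piFinSuccAbove (fun _ : Fin (n+1) => ℝ) 0 with he
  have hmp := (measurePreserving_piFinSuccAbove (fun _ : Fin (n+1) => (volume : Measure ℝ)) 0).symm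
  have hS := truncCube_measurableSet (n+1) t
  have key : volume (truncCube (n+1) t)
      = ((volume : Measure ℝ).prod (Measure.pi fun _ : Fin n => (volume : Measure ℝ)))
          (e.symm ⁻¹' truncCube (n+1) t) := by
    rw [hmp.measure_preimage hS.nullMeasurableSet, volume_pi]
  rw [key, Measure.prod_apply (e.symm.measurable hS)]
  have hfib : ∀ y : ℝ, (Prod.mk y ⁻¹' (e.symm ⁻¹' truncCube (n+1) t))
      = if y ∈ Set.Icc (0:ℝ) 1 then truncCube n (t - y) else ∅ := by
    intro y
    ext z
    simp only [Set.mem_preimage, he, MeasurableEquiv.piFinSuccAbove_symm_apply,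
      Fin.insertNthEquiv_zero, Fin.consEquiv_apply]
    have hmem : Fin.cons y z ∈ truncCube (n+1) t
        ↔ (y ∈ Set.Icc (0:ℝ) 1 ∧ ∀ j, z j ∈ Set.Icc (0:ℝ) 1) ∧ y + ∑ j, z j ≤ t := by
      simp only [truncCube, Set.mem_setOf_eq, Fin.sum_cons, Fin.forall_fin_succ,
        Fin.cons_zero, Fin.cons_succ]
    refine Iff.trans (Eq.to_iff rfl) (Iff.trans hmem ?_)
    by_cases hy : y ∈ Set.Icc (0:ℝ) 1
    · rw [if_pos hy]
      simp only [truncCube, Set.mem_setOf_eq]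
      constructor
      · rintro ⟨⟨_, hz⟩, hsum⟩; exact ⟨hz, by linarith⟩
      · rintro ⟨hz, hsum⟩; exact ⟨⟨hy, hz⟩, by linarith⟩
    · rw [if_neg hy]
      simp only [Set.mem_empty_iff_false, iff_false]
      rintro ⟨⟨hy', _⟩, _⟩; exact hy hy'
  simp_rw [hfib]
  rw [← lintegral_indicator measurableSet_Icc]
  congr 1
  funext y
  rw [Set.indicator_apply]
  by_cases hy : y ∈ Set.Icc (0:ℝ) 1
  · rw [if_pos hy, if_pos hy, ← volume_pi]
  · rw [if_neg hy, if_neg hy, measure_empty]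

/-- The explicit formula. -/
noncomputable def FAux (n : ℕ) (t : ℝ) : ℝ :=
  (1 / (n.factorial : ℝ)) *
    ∑ k ∈ Finset.range (n + 1), (n.choose k : ℝ) * (-1) ^ k * gAux n k t

lemma sum_step (n : ℕ) (t : ℝ) :
    ∑ k ∈ Finset.range (n+2), (((n+1).choose k : ℝ)) * (-1)^k * gAux (n+1) k t
      = ∑ k ∈ Finset.range (n+1),
          (n.choose k : ℝ) * (-1)^k * (gAux (n+1) k t - gAux (n+1) k (t-1)) := by
  have hsh : ∀ k : ℕ, gAux (n+1) k (t-1) = gAux (n+1) (k+1) t := fun k => gAux_shift _ k t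
  simp_rw [hsh, mul_sub]
  rw [Finset.sum_sub_distrib]
  have h2 : ∑ k ∈ Finset.range (n+1), (n.choose k : ℝ) * (-1)^k * gAux (n+1) k t
      = ∑ k ∈ Finset.range (n+2), (n.choose k : ℝ) * (-1)^k * gAux (n+1) k t := by
    rw [Finset.sum_range_succ _ (n+1), Nat.choose_succ_self]
    simp
  rw [h2, Finset.sum_range_succ' _ (n+1),
    Finset.sum_range_succ' (fun k => (n.choose k : ℝ) * (-1)^k * gAux (n+1) k t) (n+1)]
  have key : ∀ k ∈ Finset.range (n+1),
      (((n+1).choose (k+1) : ℝ)) * (-1)^(k+1) * gAux (n+1) (k+1) t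
        = (n.choose (k+1) : ℝ) * (-1)^(k+1) * gAux (n+1) (k+1) t
          - (n.choose k : ℝ) * (-1)^k * gAux (n+1) (k+1) t := by
    intro k _
    have hp : (((n+1).choose (k+1) : ℝ)) = (n.choose k : ℝ) + (n.choose (k+1) : ℝ) := by
      exact_mod_cast Nat.choose_succ_succ' n k
    rw [hp]; ring
  rw [Finset.sum_congr rfl key, Finset.sum_sub_distrib]
  simp
  ring

lemma truncVol_eq_FAux (n : ℕ) (t : ℝ) : truncVol n t = FAux n t := by
  induction n generalizing t with
  | zero =>
    simp only [truncVol, FAux, gAux]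
    rw [Finset.sum_range_one]
    by_cases ht : (0:ℝ) ≤ t
    · have hset : truncCube 0 t = Set.univ := by
        ext x
        simp [truncCube, ht]
      rw [hset, volume_pi, Measure.pi_univ]
      simp [ht]
    · have hset : truncCube 0 t = ∅ := by
        ext x
        simp [truncCube, ht]
      rw [hset, measure_empty]
      simp [ht]
  | succ n ih =>
    have hF_nonneg : ∀ s : ℝ, 0 ≤ FAux n s := by
      intro s; rw [← ih s]; exact ENNReal.toReal_nonneg
    have hF_le_one : ∀ s : ℝ, FAux n s ≤ 1 := by
      intro s; rw [← ih s]
      exact ENNReal.toReal_le_of_le_ofReal zero_le_one (by simpa using truncCube_volume_le_one n s)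
    have hF_meas : Measurable (FAux n) := by
      apply Measurable.const_mul
      exact Finset.measurable_sum _ fun k _ => ((gAux_measurable n k).const_mul _)
    have hmeas : Measurable (fun y : ℝ => FAux n (t - y)) :=
      hF_meas.comp (measurable_const.sub measurable_id)
    have hint : Integrable (fun y : ℝ => FAux n (t - y))
        ((volume : Measure ℝ).restrict (Set.Icc 0 1)) := by
      refine Integrable.mono' (g := fun _ => (1:ℝ)) ?_ hmeas.aestronglyMeasurable ?_
      · rw [MeasureTheory.integrable_const_iff]
        right
        rw [isFiniteMeasure_restrict, Real.volume_Icc]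
        norm_num
      · filter_upwards with y
        rw [Real.norm_eq_abs, abs_le]
        exact ⟨by linarith [hF_nonneg (t - y)], hF_le_one (t - y)⟩
    have step1 : truncVol (n+1) t = ∫ y in Set.Icc (0:ℝ) 1, FAux n (t - y) := by
      rw [truncVol, volume_truncCube_succ]
      have hvol : ∀ y : ℝ, volume (truncCube n (t - y)) = ENNReal.ofReal (FAux n (t - y)) := by
        intro y
        rw [← ih (t - y), truncVol, ENNReal.ofReal_toReal (truncCube_volume_ne_top n (t - y))]
      simp_rw [hvol]
      rw [← MeasureTheory.ofReal_integral_eq_lintegral_ofReal hint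
        (Filter.Eventually.of_forall fun y => hF_nonneg (t - y))]
      rw [ENNReal.toReal_ofReal]
      exact integral_nonneg fun y => hF_nonneg (t - y)
    rw [step1, MeasureTheory.integral_Icc_eq_integral_Ioc,
      ← intervalIntegral.integral_of_le (zero_le_one' ℝ)]
    have step2 : ∫ y in (0:ℝ)..1, FAux n (t - y)
        = (1 / (n.factorial : ℝ)) * ∑ k ∈ Finset.range (n+1),
            (n.choose k : ℝ) * (-1)^k * ∫ y in (0:ℝ)..1, gAux n k (t - y) := by
      simp only [FAux]
      rw [intervalIntegral.integral_const_mul]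
      congr 1
      rw [intervalIntegral.integral_finset_sum]
      · exact Finset.sum_congr rfl fun k _ => by
          rw [intervalIntegral.integral_const_mul]
      · intro k _
        have h0 : IntervalIntegrable (fun y => gAux n k (t - y)) volume 0 1 := by
          have h1 := (gAux_intervalIntegrable n k t (t-1)).comp_sub_left t
          rw [sub_self, sub_sub_cancel] at h1
          exact h1
        exact h0.const_mul _
    rw [step2]
    have step3 : ∀ k : ℕ, ∫ y in (0:ℝ)..1, gAux n k (t - y)
        = (gAux (n+1) k t - gAux (n+1) k (t-1)) / (n+1) := by
      intro k
      rw [intervalIntegral.integral_comp_sub_left (gAux n k) t, sub_zero, integral_gAux]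
    simp_rw [step3]
    rw [FAux]
    have hfac : ((n+1).factorial : ℝ) = (n.factorial : ℝ) * (n+1) := by
      rw [Nat.factorial_succ]; push_cast; ring
    have hsum := sum_step n t
    have hfac_ne : (n.factorial : ℝ) ≠ 0 := Nat.cast_ne_zero.mpr n.factorial_ne_zero
    have hn1_ne : ((n:ℝ) + 1) ≠ 0 := by positivity
    rw [show n + 1 + 1 = n + 2 from rfl, hsum, hfac]
    rw [Finset.mul_sum, Finset.mul_sum]
    refine Finset.sum_congr rfl fun k _ => ?_
    field_simp

theorem truncCube_volume_formula (n : ℕ) (hn : 0 < n) (t : ℝ)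
    (ht : t ∈ Set.Icc (0 : ℝ) n) :
    truncVol n t =
      (1 / (n.factorial : ℝ)) *
        ∑ k ∈ Finset.range (n + 1),
          (n.choose k : ℝ) * (-1) ^ k * (t - k) ^ n *
            (if 0 ≤ t - (k : ℝ) then 1 else 0) := by
  rw [truncVol_eq_FAux, FAux]
  congr 1
  refine Finset.sum_congr rfl fun k _ => ?_
  rw [gAux]
  ring
end

section
/- For every positive integer n and every t ∈ (0, n], the average first moment of the truncated cube satisfies P_n(t) = (1/n)·( t − [Σ_{k=0}^{n} C(n,k)(−1)^k (t−k)^{n+1} 𝟙{t ≥ k}] / (V_n(t)·(n+1)!) ). -/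
open MeasureTheory


lemma maxsq_deriv (x : ℝ) : HasDerivAt (fun y => (max y 0)^2) (2 * max x 0) x := by
  rcases lt_trichotomy x 0 with hx | rfl | hx
  · have h0 : HasDerivAt (fun _ : ℝ => (0:ℝ)) 0 x := hasDerivAt_const x 0
    have : HasDerivAt (fun y => (max y 0)^2) 0 x := by
      refine h0.congr_of_eventuallyEq ?_
      filter_upwards [eventually_lt_nhds hx] with y hy
      rw [max_eq_right hy.le]; norm_num
    simpa [max_eq_right hx.le] using this
  · rw [hasDerivAt_iff_tendsto_slope]
    have hb : ∀ y : ℝ, ‖slope (fun y => (max y 0)^2) 0 y‖ ≤ |y| := by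
      intro y
      rw [slope_def_field]
      rcases le_or_gt y 0 with hy | hy
      · rw [max_eq_right hy]
        simp
      · rw [max_eq_left hy.le]
        have h : (y^2 - (max (0:ℝ) 0)^2)/(y-0) = y := by
          rw [max_self]; field_simp; ring
        rw [h, Real.norm_eq_abs]
    have hg : Filter.Tendsto (fun y : ℝ => |y|) (nhdsWithin 0 {0}ᶜ) (nhds 0) := by
      have := continuous_abs.tendsto (0:ℝ)
      simpa using this.mono_left nhdsWithin_le_nhds
    simpa [max_self] using squeeze_zero_norm hb hg
  · have hp : HasDerivAt (fun y : ℝ => y^2) (2 * x) x := by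
      simpa using hasDerivAt_pow 2 x
    have : HasDerivAt (fun y => (max y 0)^2) (2 * x) x := by
      refine hp.congr_of_eventuallyEq ?_
      filter_upwards [eventually_gt_nhds hx] with y hy
      rw [max_eq_left hy.le]
    simpa [max_eq_left hx.le] using this

lemma maxpow_deriv (m : ℕ) (x : ℝ) :
    HasDerivAt (fun y => (max y 0)^(m+2)) (((m:ℝ)+2) * (max x 0)^(m+1)) x := by
  have hid : ∀ y : ℝ, y^m * (max y 0)^2 = (max y 0)^(m+2) := by
    intro y
    rcases le_or_gt y 0 with hy | hy
    · rw [max_eq_right hy, zero_pow (two_ne_zero), zero_pow (by omega : m + 2 ≠ 0), mul_zero]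
    · rw [max_eq_left hy.le]; ring
  have h := (hasDerivAt_pow m x).mul (maxsq_deriv x)
  have h2 : HasDerivAt (fun y => (max y 0)^(m+2))
      ((m:ℝ) * x ^ (m-1) * (max x 0)^2 + x^m * (2 * max x 0)) x := by
    refine h.congr_of_eventuallyEq ?_
    filter_upwards with y using (hid y).symm
  convert h2 using 1
  rcases le_or_gt x 0 with hx | hx
  · rw [max_eq_right hx, zero_pow (by omega : m + 1 ≠ 0)]; ring
  · rw [max_eq_left hx.le]
    rcases Nat.eq_zero_or_pos m with rfl | hm
    · norm_num
    · obtain ⟨m', rfl⟩ : ∃ m', m = m' + 1 := ⟨m - 1, by omega⟩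
      push_cast [Nat.add_sub_cancel]
      ring

lemma int_maxpow (m : ℕ) (c : ℝ) :
    ∫ u in (0:ℝ)..1, (max (c - u) 0)^(m+1)
      = ((max c 0)^(m+2) - (max (c-1) 0)^(m+2))/((m:ℝ)+2) := by
  have hm : ((m:ℝ)+2) ≠ 0 := by positivity
  have hder : ∀ u ∈ Set.uIcc (0:ℝ) 1,
      HasDerivAt (fun u => -(max (c - u) 0)^(m+2)/((m:ℝ)+2)) ((max (c - u) 0)^(m+1)) u := by
    intro u _
    have h1 : HasDerivAt (fun u : ℝ => c - u) (-1) u := by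
      simpa using (hasDerivAt_id u).const_sub c
    have h2 := (maxpow_deriv m (c - u)).comp u h1
    have h4 := (h2.div_const ((m:ℝ)+2)).neg
    have h5 : HasDerivAt (fun u => -(max (c - u) 0)^(m+2)/((m:ℝ)+2))
        (-(((m:ℝ) + 2) * max (c - u) 0 ^ (m + 1) * -1 / ((m:ℝ) + 2))) u := by
      refine h4.congr_of_eventuallyEq (Filter.Eventually.of_forall fun v => ?_)
      simp only [Function.comp_apply, Pi.neg_apply]
      ring
    convert h5 using 1
    · rw [mul_neg_one, neg_div, neg_neg, mul_div_cancel_left₀ _ hm]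
  have hcont : Continuous (fun u : ℝ => (max (c - u) 0)^(m+1)) := by fun_prop
  rw [intervalIntegral.integral_eq_sub_of_hasDerivAt hder (hcont.intervalIntegrable 0 1)]
  ring

noncomputable def cubeInt (n : ℕ) (t : ℝ) : ℝ :=
  ∫ x in Set.univ.pi (fun _ : Fin n => Set.Icc (0:ℝ) 1), max (t - ∑ i, x i) 0

lemma cubeInt_zero (t : ℝ) : cubeInt 0 t = max t 0 := by
  simp [cubeInt, Set.pi_univ]
  rw [Subsingleton.eq_univ_of_nonempty (s := Set.Icc (fun _ : Fin 0 => (0:ℝ)) fun _ => 1)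
    ⟨fun _ => 0, Set.left_mem_Icc.2 (by intro i; exact i.elim0)⟩, measureReal_def,
    MeasureTheory.volume_pi, Measure.pi_of_empty]
  simp

lemma cubeInt_succ (n : ℕ) (t : ℝ) :
    cubeInt (n+1) t = ∫ u in Set.Icc (0:ℝ) 1, cubeInt n (t - u) := by
  classical
  set S : Set (Fin n → ℝ) := Set.univ.pi (fun _ => Set.Icc (0:ℝ) 1) with hS
  set e := MeasurableEquiv.piFinSuccAbove (fun _ : Fin (n+1) => ℝ) 0 with he
  have hmp := MeasureTheory.volume_preserving_piFinSuccAbove (fun _ : Fin (n+1) => ℝ) 0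
  have hSm : MeasurableSet S := (isCompact_univ_pi (fun _ => isCompact_Icc)).isClosed.measurableSet
  have hprodm : MeasurableSet (Set.Icc (0:ℝ) 1 ×ˢ S) := measurableSet_Icc.prod hSm
  set g : ℝ × (Fin n → ℝ) → ℝ := fun p => max (t - p.1 - ∑ i, p.2 i) 0 with hg
  have hgc : Continuous g := by fun_prop
  have hint : IntegrableOn g (Set.Icc (0:ℝ) 1 ×ˢ S) := by
    exact hgc.continuousOn.integrableOn_compact (isCompact_Icc.prod
      (isCompact_univ_pi (fun _ => isCompact_Icc)))
  have key : ∀ x : Fin (n+1) → ℝ,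
      (Set.univ.pi (fun _ : Fin (n+1) => Set.Icc (0:ℝ) 1)).indicator
        (fun x => max (t - ∑ i, x i) 0) x
        = (Set.Icc (0:ℝ) 1 ×ˢ S).indicator g (e x) := by
    intro x
    have hex : e x = (x 0, fun j => x (Fin.succAbove 0 j)) := rfl
    have hmem : x ∈ Set.univ.pi (fun _ : Fin (n+1) => Set.Icc (0:ℝ) 1) ↔
        e x ∈ Set.Icc (0:ℝ) 1 ×ˢ S := by
      rw [hex]
      simp only [Set.mem_pi, Set.mem_univ, forall_true_left, Set.mem_prod, hS]
      constructor
      · intro h; exact ⟨h 0, fun j => h _⟩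
      · rintro ⟨h0, h1⟩ i
        rcases Fin.eq_zero_or_eq_succ i with rfl | ⟨j, rfl⟩
        · exact h0
        · simpa using h1 j
    have hsum : ∑ i, x i = x 0 + ∑ j, x (Fin.succAbove 0 j) := by
      simpa using Fin.sum_univ_succ x
    by_cases hx : x ∈ Set.univ.pi (fun _ : Fin (n+1) => Set.Icc (0:ℝ) 1)
    · rw [Set.indicator_of_mem hx, Set.indicator_of_mem (hmem.mp hx), hg, hex]
      simp [hsum]; ring_nf
    · rw [Set.indicator_of_notMem hx, Set.indicator_of_notMem (fun h => hx (hmem.mpr h))]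
  calc cubeInt (n+1) t
      = ∫ x, (Set.univ.pi (fun _ : Fin (n+1) => Set.Icc (0:ℝ) 1)).indicator
          (fun x => max (t - ∑ i, x i) 0) x := by
        rw [cubeInt, integral_indicator]
        exact (isCompact_univ_pi (fun _ => isCompact_Icc)).isClosed.measurableSet
    _ = ∫ x, (Set.Icc (0:ℝ) 1 ×ˢ S).indicator g (e x) := by
        exact integral_congr_ae (Filter.Eventually.of_forall key)
    _ = ∫ p, (Set.Icc (0:ℝ) 1 ×ˢ S).indicator g p := by
        exact hmp.integral_comp e.measurableEmbedding _
    _ = ∫ p in Set.Icc (0:ℝ) 1 ×ˢ S, g p := integral_indicator hprodm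
    _ = ∫ u in Set.Icc (0:ℝ) 1, ∫ y in S, g (u, y) := setIntegral_prod g hint
    _ = ∫ u in Set.Icc (0:ℝ) 1, cubeInt n (t - u) := by
        rfl


lemma sum_pascal (n : ℕ) (q : ℕ → ℝ) :
    ∑ k ∈ Finset.range (n+2), (((n+1).choose k : ℕ) : ℝ) * (-1)^k * q k
      = ∑ k ∈ Finset.range (n+1), ((n.choose k : ℕ) : ℝ) * (-1)^k * (q k - q (k+1)) := by
  have h1 : (∑ k ∈ Finset.range (n+1), ((n.choose (k+1) : ℕ) : ℝ) * (-1)^(k+1) * q (k+1))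
        + ((n.choose 0 : ℕ) : ℝ) * (-1)^0 * q 0
      = ∑ k ∈ Finset.range (n+1), ((n.choose k : ℕ) : ℝ) * (-1)^k * q k := by
    rw [← Finset.sum_range_succ' (fun k => ((n.choose k : ℕ) : ℝ) * (-1)^k * q k) (n+1),
      Finset.sum_range_succ, Nat.choose_succ_self]
    push_cast; ring
  rw [Finset.sum_range_succ' _ (n+1)]
  simp only [Nat.choose_succ_succ, Nat.cast_add]
  have expand : ∑ k ∈ Finset.range (n+1),
        (((n.choose k : ℕ) : ℝ) + ((n.choose (k+1) : ℕ) : ℝ)) * (-1)^(k+1) * q (k+1)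
      = (∑ k ∈ Finset.range (n+1), -(((n.choose k : ℕ) : ℝ) * (-1)^k * q (k+1)))
        + ∑ k ∈ Finset.range (n+1), ((n.choose (k+1) : ℕ) : ℝ) * (-1)^(k+1) * q (k+1) := by
    rw [← Finset.sum_add_distrib]
    apply Finset.sum_congr rfl; intros; ring
  rw [expand, Finset.sum_neg_distrib]
  have rhs : ∑ k ∈ Finset.range (n+1), ((n.choose k : ℕ) : ℝ) * (-1)^k * (q k - q (k+1))
      = (∑ k ∈ Finset.range (n+1), ((n.choose k : ℕ) : ℝ) * (-1)^k * q k)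
        - ∑ k ∈ Finset.range (n+1), ((n.choose k : ℕ) : ℝ) * (-1)^k * q (k+1) := by
    rw [← Finset.sum_sub_distrib]
    apply Finset.sum_congr rfl; intros; ring
  rw [rhs]
  simp only [Nat.choose_zero_right, Nat.cast_one, pow_zero] at h1 ⊢
  linear_combination h1

lemma cubeInt_closed (n : ℕ) : ∀ t : ℝ,
    cubeInt n t = (∑ k ∈ Finset.range (n+1),
      ((n.choose k : ℕ) : ℝ) * (-1)^k * (max (t - k) 0)^(n+1)) / ((n+1).factorial : ℝ) := by
  induction n with
  | zero => intro t; rw [cubeInt_zero]; simp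
  | succ n ih =>
    intro t
    rw [cubeInt_succ, MeasureTheory.integral_Icc_eq_integral_Ioc,
      ← intervalIntegral.integral_of_le zero_le_one]
    have step1 : ∫ u in (0:ℝ)..1, cubeInt n (t - u)
        = ∫ u in (0:ℝ)..1, (∑ k ∈ Finset.range (n+1),
            ((n.choose k : ℕ) : ℝ) * (-1)^k * (max (t - u - k) 0)^(n+1)) / ((n+1).factorial : ℝ) := by
      refine intervalIntegral.integral_congr (fun u _ => ?_)
      rw [ih (t - u)]
    rw [step1, intervalIntegral.integral_div, intervalIntegral.integral_finset_sum
      (fun k _ => (by fun_prop : Continuous (fun u : ℝ =>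
        ((n.choose k : ℕ) : ℝ) * (-1)^k * (max (t - u - k) 0)^(n+1))).intervalIntegrable 0 1)]
    have hterm : ∀ k : ℕ, (∫ u in (0:ℝ)..1,
          ((n.choose k : ℕ) : ℝ) * (-1)^k * (max (t - u - k) 0)^(n+1))
        = ((n.choose k : ℕ) : ℝ) * (-1)^k *
          (((max (t - k) 0)^(n+2) - (max (t - (k+1:ℕ)) 0)^(n+2))/((n:ℝ)+2)) := by
      intro k
      rw [intervalIntegral.integral_const_mul]
      congr 1
      have harg : (fun u : ℝ => (max (t - u - (k:ℝ)) 0)^(n+1))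
          = (fun u : ℝ => (max ((t - (k:ℝ)) - u) 0)^(n+1)) := by
        funext u; rw [sub_right_comm]
      rw [harg, int_maxpow n (t - (k:ℝ))]
      congr 3
      push_cast; ring
    simp only [hterm]
    rw [sum_pascal n (fun k => (max (t - k) 0)^(n+2))]
    have hpull : ∑ i ∈ Finset.range (n+1), ((n.choose i:ℕ):ℝ) * (-1)^i *
        ((max (t - i) 0)^(n+2) - (max (t - ((i+1:ℕ):ℝ)) 0)^(n+2)) / ((n:ℝ)+2)
        = (∑ i ∈ Finset.range (n+1), ((n.choose i:ℕ):ℝ) * (-1)^i *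
          ((max (t - i) 0)^(n+2) - (max (t - ((i+1:ℕ):ℝ)) 0)^(n+2))) / ((n:ℝ)+2) := by
      rw [Finset.sum_div]
    have hfac : (((n+1)+1).factorial : ℝ) = ((n:ℝ)+2) * ((n+1).factorial : ℝ) := by
      rw [Nat.factorial_succ]; push_cast; ring
    rw [show (fun i => ((n.choose i:ℕ):ℝ) * (-1)^i *
        (((max (t - i) 0)^(n+2) - (max (t - ((i+1:ℕ):ℝ)) 0)^(n+2)) / ((n:ℝ)+2)))
        = (fun i => ((n.choose i:ℕ):ℝ) * (-1)^i *
        ((max (t - i) 0)^(n+2) - (max (t - ((i+1:ℕ):ℝ)) 0)^(n+2)) / ((n:ℝ)+2)) from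
      funext (fun i => by ring)]
    rw [hpull, hfac, div_div]

lemma maxpow_ite (m : ℕ) (hm : m ≠ 0) (s : ℝ) :
    (max s 0)^m = s^m * (if 0 ≤ s then 1 else 0) := by
  rcases le_or_gt 0 s with hs | hs
  · rw [max_eq_left hs, if_pos hs, mul_one]
  · rw [max_eq_right hs.le, if_neg (not_le.mpr hs), mul_zero, zero_pow hm]

theorem truncCube_moment_formula (n : ℕ) (hn : 0 < n) (t : ℝ)
    (ht : t ∈ Set.Ioc (0 : ℝ) n) :
    truncMoment n t =
      (1 / (n : ℝ)) *
        (t - (∑ k ∈ Finset.range (n + 1),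
            (n.choose k : ℝ) * (-1) ^ k * (t - k) ^ (n + 1) *
              (if 0 ≤ t - (k : ℝ) then 1 else 0)) /
          (truncVol n t * ((n + 1).factorial : ℝ))) := by
  classical
  obtain ⟨ht0, htn⟩ := ht
  set S : Set (Fin n → ℝ) := Set.univ.pi (fun _ => Set.Icc (0:ℝ) 1) with hS
  have hSc : IsCompact S := isCompact_univ_pi (fun _ => isCompact_Icc)
  have hTsub : truncCube n t ⊆ S := by
    intro x hx
    exact Set.mem_univ_pi.mpr (fun i => hx.1 i)
  have hTclosed : IsClosed (truncCube n t) := by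
    have h1 : truncCube n t = S ∩ {x | ∑ i, x i ≤ t} := by
      ext x
      simp only [truncCube, Set.mem_setOf_eq, Set.mem_inter_iff, hS, Set.mem_pi,
        Set.mem_univ, forall_true_left, Set.mem_Icc]
    rw [h1]
    exact hSc.isClosed.inter (isClosed_le (by fun_prop) continuous_const)
  have hTc : IsCompact (truncCube n t) := hSc.of_isClosed_subset hTclosed hTsub
  have hTm : MeasurableSet (truncCube n t) := hTclosed.measurableSet
  -- volume bounds
  have hvolS : volume S = 1 := by
    rw [hS, volume_pi_pi]
    simp
  have hne_top : volume (truncCube n t) ≠ ⊤ := by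
    refine ne_of_lt (lt_of_le_of_lt (measure_mono hTsub) ?_)
    rw [hvolS]; exact ENNReal.one_lt_top
  have hVpos : 0 < truncVol n t := by
    set ε : ℝ := min (t/n) 1 with hε
    have hεpos : 0 < ε := lt_min (div_pos ht0 (by exact_mod_cast hn)) one_pos
    have hsub2 : Set.univ.pi (fun _ : Fin n => Set.Icc (0:ℝ) ε) ⊆ truncCube n t := by
      intro x hx
      rw [Set.mem_univ_pi] at hx
      constructor
      · intro i
        exact ⟨(hx i).1, le_trans (hx i).2 (min_le_right _ _)⟩
      · calc ∑ i, x i ≤ ∑ _i : Fin n, ε := Finset.sum_le_sum (fun i _ => (hx i).2)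
          _ = n * ε := by rw [Finset.sum_const, Finset.card_univ, Fintype.card_fin,
                nsmul_eq_mul]
          _ ≤ n * (t/n) := by
              exact mul_le_mul_of_nonneg_left (min_le_left _ _) (by positivity)
          _ = t := by field_simp
    have hvol2 : (0:ENNReal) < volume (Set.univ.pi (fun _ : Fin n => Set.Icc (0:ℝ) ε)) := by
      rw [volume_pi_pi]
      simp only [Real.volume_Icc, sub_zero]
      rw [Finset.prod_const]
      exact pos_iff_ne_zero.mpr (pow_ne_zero _ (ENNReal.ofReal_pos.mpr hεpos).ne')
    have hpos : 0 < volume (truncCube n t) := lt_of_lt_of_le hvol2 (measure_mono hsub2)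
    exact ENNReal.toReal_pos hpos.ne' hne_top
  -- integral of (t - sum) over truncCube equals cubeInt
  have hind : ∫ x in truncCube n t, (t - ∑ i, x i) = cubeInt n t := by
    rw [← integral_indicator hTm, cubeInt, ← integral_indicator hSc.isClosed.measurableSet]
    congr 1
    funext x
    by_cases hxT : x ∈ truncCube n t
    · rw [Set.indicator_of_mem hxT, Set.indicator_of_mem (hTsub hxT),
        max_eq_left (by linarith [hxT.2])]
    · rw [Set.indicator_of_notMem hxT]
      by_cases hxS : x ∈ S
      · have hsum : ¬ (∑ i, x i ≤ t) := by
          intro hle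
          exact hxT ⟨fun i => Set.mem_univ_pi.mp hxS i, hle⟩
        rw [Set.indicator_of_mem hxS, max_eq_right (by linarith [not_le.mp hsum])]
      · rw [Set.indicator_of_notMem hxS]
  -- integrability
  have hint1 : IntegrableOn (fun x : Fin n → ℝ => ∑ i, x i) (truncCube n t) :=
    (Continuous.continuousOn (by fun_prop)).integrableOn_compact hTc
  have hintc : IntegrableOn (fun _ : Fin n → ℝ => t) (truncCube n t) := by
    refine (integrableOn_const_iff (C := t)).mpr (Or.inr ?_)
    exact lt_of_le_of_ne (le_top) hne_top
  have hsplit : ∫ x in truncCube n t, (t - ∑ i, x i)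
      = t * truncVol n t - ∫ x in truncCube n t, ∑ i, x i := by
    rw [integral_sub hintc hint1, setIntegral_const]
    rw [truncVol, smul_eq_mul, mul_comm, measureReal_def]
  have hI : ∫ x in truncCube n t, ∑ i, x i = t * truncVol n t - cubeInt n t := by
    rw [← hind, hsplit]; ring
  -- closed form with ite
  have hsum_eq : (∑ k ∈ Finset.range (n + 1),
        (n.choose k : ℝ) * (-1) ^ k * (t - k) ^ (n + 1) *
          (if 0 ≤ t - (k : ℝ) then 1 else 0))
      = ∑ k ∈ Finset.range (n+1), ((n.choose k : ℕ) : ℝ) * (-1)^k * (max (t - k) 0)^(n+1) := by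
    refine Finset.sum_congr rfl (fun k _ => ?_)
    rw [maxpow_ite (n+1) (Nat.succ_ne_zero n) (t - k)]
    ring
  have hclosed := cubeInt_closed n t
  have hfac : ((n+1).factorial : ℝ) ≠ 0 := by positivity
  have hnne : (n:ℝ) ≠ 0 := by exact_mod_cast hn.ne'
  rw [truncMoment, hI, hsum_eq, hclosed]
  have hVne : truncVol n t ≠ 0 := hVpos.ne'
  field_simp
end

section
/- As α → 0⁺, the limiting log-shaping-gain satisfies lim_{α→0⁺} ( h_max(α) − log(2α) ) = 1 − log 2; i.e., the ultimate shaping gain of the average-intensity-limited channel equals e/2 (about 1.33 dB in optical SNR). -/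
open Filter Real

/-- Auxiliary: quadratic lower bound on exp. -/
lemma aux_exp_quad {m : ℝ} (hm : 0 ≤ m) : 1 + m + m ^ 2 / 2 ≤ Real.exp m := by
  have h := Real.sum_le_exp_of_nonneg hm 3
  simpa [Finset.sum_range_succ, Nat.factorial] using h

lemma aux_t_tendsto :
    Tendsto (fun m : ℝ => m / (Real.exp m - 1)) atTop (nhds 0) := by
  have h2 : Tendsto (fun m : ℝ => 2 / m) atTop (nhds 0) := by
    simpa [div_eq_mul_inv] using tendsto_inv_atTop_zero.const_mul (2 : ℝ)
  refine tendsto_of_tendsto_of_tendsto_of_le_of_le' tendsto_const_nhds h2 ?_ ?_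
  · filter_upwards [eventually_gt_atTop (0 : ℝ)] with m hm
    have h1 : (0 : ℝ) < Real.exp m - 1 := by
      have := Real.add_one_lt_exp (ne_of_gt hm); linarith
    positivity
  · filter_upwards [eventually_gt_atTop (0 : ℝ)] with m hm
    have hq := aux_exp_quad hm.le
    have h1 : (0 : ℝ) < m ^ 2 / 2 := by positivity
    have h2 : m ^ 2 / 2 ≤ Real.exp m - 1 := by linarith
    calc m / (Real.exp m - 1) ≤ m / (m ^ 2 / 2) :=
          div_le_div_of_nonneg_left hm.le h1 h2
      _ = 2 / m := by field_simp

lemma aux_F_tendsto :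
    Tendsto (fun m : ℝ => 1 - m / (Real.exp m - 1) + Real.log (1 - Real.exp (-m))
      - Real.log (1 - m / (Real.exp m - 1)) - Real.log 2) atTop
      (nhds (1 - Real.log 2)) := by
  have ht := aux_t_tendsto
  have hexp : Tendsto (fun m : ℝ => Real.exp (-m)) atTop (nhds 0) := by
    simpa using Real.tendsto_exp_neg_atTop_nhds_zero
  have hlog : ContinuousAt Real.log 1 := Real.continuousAt_log one_ne_zero
  have h1 : Tendsto (fun m : ℝ => Real.log (1 - Real.exp (-m))) atTop (nhds 0) := by
    have : Tendsto (fun m : ℝ => 1 - Real.exp (-m)) atTop (nhds 1) := by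
      simpa using tendsto_const_nhds.sub hexp
    simpa [Function.comp_def] using hlog.tendsto.comp this
  have h2 : Tendsto (fun m : ℝ => Real.log (1 - m / (Real.exp m - 1))) atTop (nhds 0) := by
    have : Tendsto (fun m : ℝ => 1 - m / (Real.exp m - 1)) atTop (nhds 1) := by
      simpa using tendsto_const_nhds.sub ht
    simpa [Function.comp_def] using hlog.tendsto.comp this
  have hc : Tendsto (fun _ : ℝ => (1:ℝ)) atTop (nhds 1) := tendsto_const_nhds
  have hc2 : Tendsto (fun _ : ℝ => Real.log 2) atTop (nhds (Real.log 2)) := tendsto_const_nhds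
  have := (((hc.sub ht).add h1).sub h2).sub hc2
  simpa using this

theorem ultimate_shaping_gain_limit
    (μ : ℝ → ℝ)
    (hμ : ∀ α ∈ Set.Ioo (0 : ℝ) (1 / 2),
      0 < μ α ∧ α = 1 / μ α - 1 / (Real.exp (μ α) - 1)) :
    Tendsto
      (fun α : ℝ =>
        (μ α * α - Real.log (μ α / (1 - Real.exp (-μ α)))) - Real.log (2 * α))
      (nhdsWithin 0 (Set.Ioi 0)) (nhds (1 - Real.log 2)) := by
  have hmem : ∀ᶠ α in nhdsWithin (0:ℝ) (Set.Ioi 0), α ∈ Set.Ioo (0:ℝ) (1/2) := by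
    have : Set.Ioo (0:ℝ) (1/2) ∈ nhdsWithin (0:ℝ) (Set.Ioi 0) :=
      Ioo_mem_nhdsGT_of_mem (by constructor <;> norm_num)
    exact this
  -- lower bound : μ α ≥ 1/α - 2
  have hbound : ∀ᶠ α in nhdsWithin (0:ℝ) (Set.Ioi 0), 1 / α - 2 ≤ μ α := by
    filter_upwards [hmem] with α hα
    obtain ⟨hm, heq⟩ := hμ α hα
    set m := μ α with hmdef
    have hα0 : (0:ℝ) < α := hα.1
    have hq := aux_exp_quad hm.le
    have hden : (0:ℝ) < m + m ^ 2 / 2 := by positivity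
    have he1 : (0:ℝ) < Real.exp m - 1 := by nlinarith
    have hle : m + m ^ 2 / 2 ≤ Real.exp m - 1 := by linarith
    have h1 : 1 / (Real.exp m - 1) ≤ 1 / (m + m ^ 2 / 2) :=
      one_div_le_one_div_of_le hden hle
    have h2 : 1 / m - 1 / (m + m ^ 2 / 2) = 1 / (m + 2) := by
      field_simp; ring
    have h3 : 1 / (m + 2) ≤ α := by
      rw [heq, ← h2]; linarith
    have hm2 : (0:ℝ) < m + 2 := by linarith
    have h4 : 1 / α ≤ m + 2 := by
      rw [div_le_iff₀ hα0]
      have := (div_le_iff₀ hm2).mp h3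
      linarith [mul_comm α (m + 2) ▸ this]
    linarith
  -- μ tends to atTop
  have hμtop : Tendsto μ (nhdsWithin (0:ℝ) (Set.Ioi 0)) atTop := by
    refine tendsto_atTop_mono' _ hbound ?_
    have h : Tendsto (fun x : ℝ => x⁻¹) (nhdsWithin 0 (Set.Ioi 0)) atTop := tendsto_inv_nhdsGT_zero
    have := tendsto_atTop_add_const_right _ (-2 : ℝ) h
    refine this.congr fun α => by rw [one_div, sub_eq_add_neg]
  -- the expression equals F ∘ μ eventually
  have hcong : ∀ᶠ α in nhdsWithin (0:ℝ) (Set.Ioi 0),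
      (fun m : ℝ => 1 - m / (Real.exp m - 1) + Real.log (1 - Real.exp (-m))
        - Real.log (1 - m / (Real.exp m - 1)) - Real.log 2) (μ α)
      = (μ α * α - Real.log (μ α / (1 - Real.exp (-μ α)))) - Real.log (2 * α) := by
    filter_upwards [hmem] with α hα
    obtain ⟨hm, heq⟩ := hμ α hα
    set m := μ α with hmdef
    have hα0 : (0:ℝ) < α := hα.1
    have he1 : (0:ℝ) < Real.exp m - 1 := by
      have := Real.add_one_lt_exp (ne_of_gt hm); linarith
    have hmlt : m < Real.exp m - 1 := by
      have hq := aux_exp_quad hm.le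
      nlinarith
    have ht1 : m / (Real.exp m - 1) < 1 := (div_lt_one he1).mpr hmlt
    have ht0 : (0:ℝ) < m / (Real.exp m - 1) := by positivity
    have h1me : (0:ℝ) < 1 - Real.exp (-m) := by
      have : Real.exp (-m) < 1 := Real.exp_lt_one_iff.mpr (by linarith)
      linarith
    have hαeq : α = (1 - m / (Real.exp m - 1)) / m := by
      rw [heq]; field_simp
    have hma : m * α = 1 - m / (Real.exp m - 1) := by
      rw [hαeq]; field_simp
    have hlog1 : Real.log (m / (1 - Real.exp (-m)))
        = Real.log m - Real.log (1 - Real.exp (-m)) :=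
      Real.log_div (ne_of_gt hm) (ne_of_gt h1me)
    have hlog2 : Real.log (2 * α) = Real.log 2 + Real.log α :=
      Real.log_mul two_ne_zero (ne_of_gt hα0)
    have hlog3 : Real.log α = Real.log (1 - m / (Real.exp m - 1)) - Real.log m := by
      rw [hαeq, Real.log_div (by linarith) (ne_of_gt hm)]
    rw [hma, hlog1, hlog2, hlog3]
    ring
  exact Tendsto.congr' hcong (aux_F_tendsto.comp hμtop)
end

section
/- Define D(x) = s_x·√(K'(s_x)) = √( 1 − s_x²·e^{s_x}/(e^{s_x} − 1)² ) for x ∈ (1/2, 1). Then D is non-decreasing on (1/2,1) and bounded (in particular 0 < D(x) < 1 for all x ∈ (1/2,1)). -/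
/-- `K(s) = e^s/(e^s − 1) − 1/s`. -/
noncomputable def K (s : ℝ) : ℝ := Real.exp s / (Real.exp s - 1) - 1 / s

open Real Set

lemma expm1_eq (u : ℝ) : Real.exp (2*u) - 1 = Real.exp u * (2 * Real.sinh u) := by
  rw [Real.sinh_eq]
  rw [show (2:ℝ)*u = u + u by ring, Real.exp_add]
  have h : Real.exp u * Real.exp (-u) = 1 := by
    rw [← Real.exp_add]; simp
  ring_nf
  nlinarith [h]

lemma sinh_lt_mul_cosh {t : ℝ} (ht : 0 < t) : Real.sinh t < t * Real.cosh t := by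
  have hmono : StrictMonoOn (fun u => u * Real.cosh u - Real.sinh u) (Ici 0) := by
    apply strictMonoOn_of_deriv_pos (convex_Ici 0)
    · exact ((continuous_id.mul Real.continuous_cosh).sub Real.continuous_sinh).continuousOn
    · intro u hu
      rw [interior_Ici, mem_Ioi] at hu
      have hd : HasDerivAt (fun u => u * Real.cosh u - Real.sinh u) (u * Real.sinh u) u := by
        have := ((hasDerivAt_id u).mul (Real.hasDerivAt_cosh u)).sub (Real.hasDerivAt_sinh u)
        refine this.congr_deriv ?_; simp only [one_mul, id_eq]; ring
      rw [hd.deriv]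
      exact mul_pos hu (Real.sinh_pos_iff.2 hu)
  have := hmono (self_mem_Ici) (le_of_lt ht : (0:ℝ) ≤ t) ht
  simpa using this

lemma r_anti : StrictAntiOn (fun t => t / Real.sinh t) (Ioi (0:ℝ)) := by
  apply strictAntiOn_of_deriv_neg (convex_Ioi 0)
  · apply ContinuousOn.div continuousOn_id Real.continuous_sinh.continuousOn
    intro t ht
    exact ne_of_gt (Real.sinh_pos_iff.2 ht)
  · intro t ht
    rw [interior_Ioi, mem_Ioi] at ht
    have hsp : 0 < Real.sinh t := Real.sinh_pos_iff.2 ht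
    have hd : HasDerivAt (fun t => t / Real.sinh t)
        ((1 * Real.sinh t - t * Real.cosh t) / (Real.sinh t)^2) t :=
      (hasDerivAt_id t).div (Real.hasDerivAt_sinh t) hsp.ne'
    rw [hd.deriv]
    apply div_neg_of_neg_of_pos
    · have := sinh_lt_mul_cosh ht; linarith
    · positivity

/-- the key identity: `s² e^s/(e^s-1)² = ((s/2)/sinh(s/2))²`. -/
lemma ratio_eq {u : ℝ} (hu : 0 < u) :
    u ^ 2 * Real.exp u / (Real.exp u - 1) ^ 2 = ((u/2) / Real.sinh (u/2)) ^ 2 := by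
  have h1 : Real.exp u - 1 = Real.exp (u/2) * (2 * Real.sinh (u/2)) := by
    have := expm1_eq (u/2); rw [show 2*(u/2) = u by ring] at this; exact this
  have hsp : 0 < Real.sinh (u/2) := Real.sinh_pos_iff.2 (by linarith)
  have hexp : Real.exp (u/2) ^ 2 = Real.exp u := by
    rw [sq, ← Real.exp_add]; ring_nf
  rw [h1, mul_pow, hexp,
    show u^2 * Real.exp u = Real.exp u * u^2 by ring,
    mul_div_mul_left _ _ (Real.exp_pos u).ne']
  field_simp

lemma r_mem {t : ℝ} (ht : 0 < t) : t / Real.sinh t ∈ Ioo (0:ℝ) 1 := by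
  have hsp : 0 < Real.sinh t := Real.sinh_pos_iff.2 ht
  constructor
  · positivity
  · rw [div_lt_one hsp]
    exact Real.self_lt_sinh_iff.2 ht

lemma inner_mem {u : ℝ} (hu : 0 < u) :
    1 - u ^ 2 * Real.exp u / (Real.exp u - 1) ^ 2 ∈ Ioo (0:ℝ) 1 := by
  rw [ratio_eq hu]
  obtain ⟨h0, h1⟩ := r_mem (show 0 < u/2 by linarith)
  constructor
  · nlinarith
  · nlinarith

lemma inner_mono {a b : ℝ} (ha : 0 < a) (hab : a ≤ b) :
    1 - a ^ 2 * Real.exp a / (Real.exp a - 1) ^ 2 ≤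
    1 - b ^ 2 * Real.exp b / (Real.exp b - 1) ^ 2 := by
  rcases eq_or_lt_of_le hab with rfl | hab
  · exact le_refl _
  rw [ratio_eq ha, ratio_eq (by linarith : (0:ℝ) < b)]
  have hr := r_anti (show a/2 ∈ Ioi (0:ℝ) by simpa using by linarith)
    (show b/2 ∈ Ioi (0:ℝ) by simpa using by linarith) (by linarith)
  obtain ⟨hb0, _⟩ := r_mem (show 0 < b/2 by linarith)
  obtain ⟨ha0, _⟩ := r_mem (show 0 < a/2 by linarith)
  simp only at hr
  nlinarith

/-- the key strict inequality `s² e^s < (e^s - 1)²`. -/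
lemma key_lt {u : ℝ} (hu : 0 < u) : u ^ 2 * Real.exp u < (Real.exp u - 1) ^ 2 := by
  have h := inner_mem hu
  have hne : (Real.exp u - 1) ^ 2 > 0 := by
    have h2 : 0 < Real.exp u - 1 := by nlinarith [Real.add_one_le_exp u]
    positivity
  have := h.1
  rw [sub_pos, div_lt_one hne] at this
  exact this

lemma K_strictMono : StrictMonoOn K (Ioi (0:ℝ)) := by
  apply strictMonoOn_of_deriv_pos (convex_Ioi 0)
  · apply ContinuousOn.sub
    · apply ContinuousOn.div Real.continuous_exp.continuousOn
        (Real.continuous_exp.sub continuous_const).continuousOn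
      intro t ht
      have h1 : 1 < Real.exp t := by nlinarith [Real.add_one_le_exp t, mem_Ioi.1 ht]
      intro h; rw [Pi.sub_apply, sub_eq_zero] at h; rw [← h] at h1; exact lt_irrefl _ h1
    · exact ContinuousOn.div continuousOn_const continuousOn_id (fun t ht => ne_of_gt ht)
  · intro t ht
    rw [interior_Ioi, mem_Ioi] at ht
    have h1 : 1 < Real.exp t := by nlinarith [Real.add_one_le_exp t]
    have hne : Real.exp t - 1 ≠ 0 := by linarith
    have hd : HasDerivAt K
        ((Real.exp t * (Real.exp t - 1) - Real.exp t * Real.exp t) / (Real.exp t - 1) ^ 2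
          - (0 * t - 1 * 1) / t ^ 2) t := by
      exact ((Real.hasDerivAt_exp t).div ((Real.hasDerivAt_exp t).sub_const 1) hne).sub
        ((hasDerivAt_const t (1:ℝ)).div (hasDerivAt_id t) ht.ne')
    rw [hd.deriv]
    have hkey := key_lt ht
    have hnum : Real.exp t * (Real.exp t - 1) - Real.exp t * Real.exp t = -Real.exp t := by ring
    rw [hnum]
    have h2 : Real.exp t / (Real.exp t - 1) ^ 2 < 1 / t ^ 2 := by
      rw [div_lt_div_iff₀ (by positivity) (by positivity)]
      nlinarith
    have : -Real.exp t / (Real.exp t - 1) ^ 2 = -(Real.exp t / (Real.exp t - 1) ^ 2) := by ring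
    rw [this]
    have : (0 * t - 1 * 1) / t ^ 2 = -(1 / t ^ 2) := by ring
    rw [this]
    linarith

theorem D_monotone_and_bounded
    (s : ℝ → ℝ)
    (hs : ∀ x ∈ Set.Ioo (1 / 2 : ℝ) 1, 0 < s x ∧ K (s x) = x)
    (D : ℝ → ℝ)
    (hD : D = fun x =>
      Real.sqrt (1 - s x ^ 2 * Real.exp (s x) / (Real.exp (s x) - 1) ^ 2)) :
    MonotoneOn D (Set.Ioo (1 / 2 : ℝ) 1) ∧
    (∀ x ∈ Set.Ioo (1 / 2 : ℝ) 1, 0 < D x ∧ D x < 1) := by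
  subst hD
  constructor
  · intro x hx y hy hxy
    obtain ⟨hsx, hKx⟩ := hs x hx
    obtain ⟨hsy, hKy⟩ := hs y hy
    have hsxy : s x ≤ s y := by
      by_contra h
      push_neg at h
      have := K_strictMono (mem_Ioi.2 hsy) (mem_Ioi.2 hsx) h
      rw [hKx, hKy] at this
      linarith
    exact Real.sqrt_le_sqrt (inner_mono hsx hsxy)
  · intro x hx
    obtain ⟨hsx, _⟩ := hs x hx
    obtain ⟨h0, h1⟩ := inner_mem hsx
    constructor
    · exact Real.sqrt_pos.2 h0
    · exact (Real.sqrt_lt' one_pos).2 (by nlinarith)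
end

section
/- Let n ≥ 2 and let C be a binary linear code of length n (a ℤ/2ℤ-submodule of (ℤ/2ℤ)^n) in which every nonzero codeword has Hamming weight at least 8. Define the Construction B set H_n = { 4z + 2p + c : z ∈ ℤ^n, p ∈ {0,1}^n with Σ_i p_i even, c ∈ {0,1}^n with c mod 2 ∈ C }. Then the minimum Euclidean distance of H_n equals √8; i.e., for all distinct x, y ∈ H_n one has ‖x − y‖₂ ≥ 2√2, and there exist distinct x, y ∈ H_n with ‖x − y‖₂ = 2√2. -/
open Finset

lemma one_le_sq_of_ne_zero {d : ℤ} (h : d ≠ 0) : 1 ≤ d ^ 2 := by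
  have := Int.one_le_abs h
  nlinarith [sq_abs d]

theorem constructionB_min_distance
    (n : ℕ) (hn : 2 ≤ n)
    (C : Submodule (ZMod 2) (Fin n → ZMod 2))
    (hC : ∀ c ∈ C, c ≠ 0 → 8 ≤ hammingNorm c)
    (H : Set (Fin n → ℤ))
    (hH : H = {x | ∃ z p c : Fin n → ℤ,
      (∀ i, p i = 0 ∨ p i = 1) ∧ Even (∑ i, p i) ∧
      (∀ i, c i = 0 ∨ c i = 1) ∧ (fun i => (c i : ZMod 2)) ∈ C ∧
      x = fun i => 4 * z i + 2 * p i + c i}) :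
    (∀ x ∈ H, ∀ y ∈ H, x ≠ y →
      2 * Real.sqrt 2 ≤ Real.sqrt (∑ i, ((x i : ℝ) - (y i : ℝ)) ^ 2)) ∧
    (∃ x ∈ H, ∃ y ∈ H, x ≠ y ∧
      Real.sqrt (∑ i, ((x i : ℝ) - (y i : ℝ)) ^ 2) = 2 * Real.sqrt 2) := by
  have sqrt8 : Real.sqrt 8 = 2 * Real.sqrt 2 := by
    rw [show (8:ℝ) = 2^2*2 by norm_num, Real.sqrt_mul (by positivity),
      Real.sqrt_sq (by norm_num)]
  constructor
  · rintro x hx y hy hxy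
    rw [hH] at hx hy
    obtain ⟨z, p, c, hp01, hpev, hc01, hcC, hxe⟩ := hx
    obtain ⟨z', p', c', hp01', hpev', hc01', hcC', hye⟩ := hy
    set d : Fin n → ℤ := fun i => x i - y i with hd
    have hdi : ∀ i, d i = 4*(z i - z' i) + 2*(p i - p' i) + (c i - c' i) := by
      intro i; simp only [hd, hxe, hye]; ring
    have key : (8:ℤ) ≤ ∑ i, d i ^ 2 := by
      by_cases hcc : (fun i => (c i : ZMod 2)) = (fun i => (c' i : ZMod 2))
      · have hceq : c = c' := by
          funext i
          have h := congrFun hcc i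
          rcases hc01 i with h1 | h1 <;> rcases hc01' i with h2 | h2 <;>
            simp_all
        by_cases hpp : p = p'
        · have hex : ∃ i, x i ≠ y i := by
            by_contra h; push_neg at h; exact hxy (funext h)
          obtain ⟨i, hi⟩ := hex
          have hz : z i ≠ z' i := by
            intro h; apply hi; rw [hxe, hye]; simp [hpp, hceq, h]
          have h16 : (16:ℤ) ≤ d i ^ 2 := by
            have h1 : d i = 4 * (z i - z' i) := by rw [hdi i, hpp, hceq]; ring
            have hk : z i - z' i ≠ 0 := sub_ne_zero.mpr hz
            have h2 := Int.one_le_abs hk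
            rw [h1]
            nlinarith [sq_abs (z i - z' i)]
          calc (8:ℤ) ≤ d i ^ 2 := by linarith
            _ ≤ ∑ j, d j ^ 2 :=
              Finset.single_le_sum (f := fun j => d j ^ 2)
                (fun j _ => sq_nonneg _) (mem_univ i)
        · set T := univ.filter (fun i => p i ≠ p' i) with hT
          have hTpm : ∀ i ∈ T, p i - p' i = 1 ∨ p i - p' i = -1 := by
            intro i hi
            simp only [hT, mem_filter, mem_univ, true_and] at hi
            rcases hp01 i with h1|h1 <;> rcases hp01' i with h2|h2 <;> omega
          have hsumT : ∑ i ∈ T, (p i - p' i) = ∑ i, (p i - p' i) := by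
            apply Finset.sum_filter_of_ne
            intro i _ h
            exact sub_ne_zero.mp h
          have hcard2 : 2 ≤ T.card := by
            have h1 : (∑ i ∈ T, (p i - p' i)) % 2 = (∑ i ∈ T, (p i - p' i) % 2) % 2 :=
              Finset.sum_int_mod _ _ _
            have h2 : ∑ i ∈ T, (p i - p' i) % 2 = (T.card : ℤ) := by
              rw [Finset.sum_congr rfl (fun i hi => by
                rcases hTpm i hi with h|h <;> rw [h] <;> decide)]
              simp
            have h3 : (∑ i ∈ T, (p i - p' i)) % 2 = 0 := by
              rw [hsumT]
              obtain ⟨k, hk⟩ : Even (∑ i, (p i - p' i)) := by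
                rw [Finset.sum_sub_distrib]; exact hpev.sub hpev'
              omega
            have hne : T.Nonempty := by
              rw [Finset.filter_nonempty_iff]
              by_contra h; push_neg at h
              exact hpp (funext fun i => h i (mem_univ i))
            have hc1 := Finset.card_pos.mpr hne
            rw [h1, h2] at h3
            omega
          have hstep : ∀ i ∈ T, (4:ℤ) ≤ d i ^ 2 := by
            intro i hi
            simp only [hT, mem_filter, mem_univ, true_and] at hi
            have hcc' : c i = c' i := by rw [hceq]
            have h1 : d i = 2 * (2*(z i - z' i) + (p i - p' i)) := by
              rw [hdi i, hcc']; ring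
            have he : 2*(z i - z' i) + (p i - p' i) ≠ 0 := by
              rcases hp01 i with h2|h2 <;> rcases hp01' i with h3|h3 <;> omega
            have := one_le_sq_of_ne_zero he
            rw [h1]
            nlinarith
          calc (8:ℤ) ≤ (T.card : ℤ) * 4 := by
                have : (2:ℤ) ≤ (T.card : ℤ) := by exact_mod_cast hcard2
                linarith
            _ = ∑ i ∈ T, (4:ℤ) := by simp [mul_comm]
            _ ≤ ∑ i ∈ T, d i ^ 2 := Finset.sum_le_sum hstep
            _ ≤ ∑ i, d i ^ 2 :=
              Finset.sum_le_sum_of_subset_of_nonneg (Finset.subset_univ T)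
                (fun i _ _ => sq_nonneg _)
      · set w : Fin n → ZMod 2 :=
          (fun i => (c i : ZMod 2)) - (fun i => (c' i : ZMod 2)) with hw
        have hwC : w ∈ C := Submodule.sub_mem C hcC hcC'
        have hwne : w ≠ 0 := sub_ne_zero.mpr hcc
        have h8 := hC w hwC hwne
        set S := univ.filter (fun i => (c i : ZMod 2) ≠ (c' i : ZMod 2)) with hS
        have hSc : hammingNorm w = S.card := by
          unfold hammingNorm
          apply Finset.card_bij (fun i _ => i) <;> simp [hw, hS, sub_ne_zero]
        have hstep : ∀ i ∈ S, (1:ℤ) ≤ d i ^ 2 := by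
          intro i hi
          simp only [hS, mem_filter, mem_univ, true_and] at hi
          have hci : c i ≠ c' i := fun h => hi (by rw [h])
          apply one_le_sq_of_ne_zero
          have h1 := hdi i
          rcases hc01 i with h2|h2 <;> rcases hc01' i with h3|h3 <;> omega
        calc (8:ℤ) ≤ (S.card : ℤ) := by
              rw [hSc] at h8; exact_mod_cast h8
          _ = ∑ i ∈ S, (1:ℤ) := by simp
          _ ≤ ∑ i ∈ S, d i ^ 2 := Finset.sum_le_sum hstep
          _ ≤ ∑ i, d i ^ 2 :=
            Finset.sum_le_sum_of_subset_of_nonneg (Finset.subset_univ S)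
              (fun i _ _ => sq_nonneg _)
    have cast_eq : ∑ i, ((x i:ℝ) - (y i:ℝ)) ^ 2 = ((∑ i, d i ^ 2 : ℤ) : ℝ) := by
      push_cast [hd]
      rfl
    rw [cast_eq, ← sqrt8]
    apply Real.sqrt_le_sqrt
    exact_mod_cast key
  · set i0 : Fin n := ⟨0, by omega⟩ with hi0
    set i1 : Fin n := ⟨1, by omega⟩ with hi1
    have hne01 : i0 ≠ i1 := by
      simp [hi0, hi1, Fin.ext_iff]
    set x : Fin n → ℤ := fun _ => 0 with hxdef
    set y : Fin n → ℤ := fun i => if i = i0 ∨ i = i1 then 2 else 0 with hydef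
    have hxH : x ∈ H := by
      rw [hH]
      refine ⟨fun _ => 0, fun _ => 0, fun _ => 0, fun i => Or.inl rfl, by simp, 
        fun i => Or.inl rfl, ?_, by funext i; simp [hxdef]⟩
      have : (fun (_ : Fin n) => ((0:ℤ) : ZMod 2)) = (0 : Fin n → ZMod 2) := by
        funext i; simp
      rw [this]
      exact Submodule.zero_mem C
    have hyH : y ∈ H := by
      rw [hH]
      refine ⟨fun _ => 0, fun i => if i = i0 ∨ i = i1 then 1 else 0, fun _ => 0,
        fun i => by by_cases h : i = i0 ∨ i = i1 <;> simp [h], ?_,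
        fun i => Or.inl rfl, ?_, ?_⟩
      · have hsum : ∑ i, (if i = i0 ∨ i = i1 then (1:ℤ) else 0) = 2 := by
          have heq : ∀ i : Fin n, (if i = i0 ∨ i = i1 then (1:ℤ) else 0) =
              (if i = i0 then 1 else 0) + (if i = i1 then 1 else 0) := by
            intro i
            by_cases h0 : i = i0 <;> by_cases h1 : i = i1 <;> simp_all
          rw [Finset.sum_congr rfl (fun i _ => heq i), Finset.sum_add_distrib]
          simp
        rw [hsum]
        decide
      · have : (fun (_ : Fin n) => ((0:ℤ) : ZMod 2)) = (0 : Fin n → ZMod 2) := by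
          funext i; simp
        rw [this]
        exact Submodule.zero_mem C
      · funext i
        by_cases h : i = i0 ∨ i = i1 <;> simp [hydef, h]
    have hxyne : x ≠ y := by
      intro h
      have := congrFun h i0
      simp [hxdef, hydef] at this
    refine ⟨x, hxH, y, hyH, hxyne, ?_⟩
    have hsum : ∑ i, ((x i : ℝ) - (y i : ℝ)) ^ 2 = 8 := by
      have heq : ∀ i : Fin n, ((x i : ℝ) - (y i : ℝ)) ^ 2 =
          (if i = i0 then 4 else 0) + (if i = i1 then 4 else 0) := by
        intro i
        by_cases h0 : i = i0
        · subst h0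
          simp only [hydef, hxdef, if_pos (Or.inl rfl), if_pos rfl,
            if_neg hne01]
          norm_num
        · by_cases h1 : i = i1
          · subst h1
            simp only [hydef, hxdef, if_pos (Or.inr rfl), if_neg h0, if_pos rfl]
            norm_num
          · simp only [hydef, hxdef, if_neg h0, if_neg h1]
            have : ¬ (i = i0 ∨ i = i1) := by tauto
            simp [this]
      rw [Finset.sum_congr rfl (fun i _ => heq i), Finset.sum_add_distrib]
      simp
      norm_num
    rw [hsum, ← sqrt8]
end
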